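/- With notation as in the resolvend setting: elements a_1, a_2 ∈ Map(G, K^c) with r_G(a_1), r_G(a_2) ∈ (K^cG)^× generate the same G-Galois K-algebra as a KG-module if and only if r_G(a_1) = b·r_G(a_2) for some b ∈ (KG)^×. -/

import Mathlib

lemma lift_coeff (K C : Type*) [Field K] [Field C] [Algebra K C]
    (G : Type*) [CommGroup G] (x : MonoidAlgebra K G) (t : G) :
    ((MonoidAlgebra.lift K (MonoidAlgebra C G) G (MonoidAlgebra.of C G)) x).coeff t =
      algebraMap K C (x.coeff t) := by
  induction x using MonoidAlgebra.induction_linear with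
  | zero => simp
  | add f g hf hg =>
      rw [map_add, MonoidAlgebra.coeff_add, MonoidAlgebra.coeff_add, Finsupp.add_apply, Finsupp.add_apply, map_add, hf, hg]
  | single g c =>
      rw [MonoidAlgebra.lift_single]
      rw [MonoidAlgebra.coeff_smul_apply]
      by_cases hgt : g = t <;>
        simp [MonoidAlgebra.of_apply, Finsupp.single_apply, Algebra.smul_def, hgt]

lemma lift_inj (K C : Type*) [Field K] [Field C] [Algebra K C]
    (G : Type*) [CommGroup G] :
    Function.Injective
      (MonoidAlgebra.lift K (MonoidAlgebra C G) G (MonoidAlgebra.of C G)) := by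
  intro x y h
  ext t
  have := congrArg (fun z : MonoidAlgebra C G => z.coeff t) h
  simp only [lift_coeff] at this
  exact (algebraMap K C).injective this

/-- Elements `a₁, a₂ : G → K^c` with invertible resolvends generate the same G-Galois
K-algebra as a KG-module (i.e. the KG-submodules `KG·r_G(a₁)` and `KG·r_G(a₂)` of `K^cG`
coincide) if and only if `r_G(a₁) = b·r_G(a₂)` for some unit `b ∈ (KG)^×`. -/
theorem stmt_16 (K C : Type*) [Field K] [Field C] [Algebra K C]
    (G : Type*) [CommGroup G] [Fintype G] [DecidableEq G]
    (a₁ a₂ : G → C)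
    (h₁ : IsUnit (∑ s : G, (MonoidAlgebra.single s⁻¹ (a₁ s) : MonoidAlgebra C G)))
    (h₂ : IsUnit (∑ s : G, (MonoidAlgebra.single s⁻¹ (a₂ s) : MonoidAlgebra C G))) :
    ({y : MonoidAlgebra C G | ∃ x : MonoidAlgebra K G,
        y = (MonoidAlgebra.lift K (MonoidAlgebra C G) G (MonoidAlgebra.of C G)) x *
          ∑ s : G, MonoidAlgebra.single s⁻¹ (a₁ s)} =
      {y : MonoidAlgebra C G | ∃ x : MonoidAlgebra K G,
        y = (MonoidAlgebra.lift K (MonoidAlgebra C G) G (MonoidAlgebra.of C G)) x *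
          ∑ s : G, MonoidAlgebra.single s⁻¹ (a₂ s)}) ↔
      ∃ b : MonoidAlgebra K G, IsUnit b ∧
        (∑ s : G, (MonoidAlgebra.single s⁻¹ (a₁ s) : MonoidAlgebra C G)) =
          (MonoidAlgebra.lift K (MonoidAlgebra C G) G (MonoidAlgebra.of C G)) b *
            ∑ s : G, MonoidAlgebra.single s⁻¹ (a₂ s) := by
  set φ := (MonoidAlgebra.lift K (MonoidAlgebra C G) G (MonoidAlgebra.of C G)) with hφ
  set r₁ := ∑ s : G, (MonoidAlgebra.single s⁻¹ (a₁ s) : MonoidAlgebra C G) with hr₁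
  set r₂ := ∑ s : G, (MonoidAlgebra.single s⁻¹ (a₂ s) : MonoidAlgebra C G) with hr₂
  constructor
  · intro h
    have m1 : r₁ ∈ {y : MonoidAlgebra C G | ∃ x, y = φ x * r₁} := ⟨1, by simp⟩
    rw [h] at m1
    obtain ⟨x, hx⟩ := m1
    have m2 : r₂ ∈ {y : MonoidAlgebra C G | ∃ x, y = φ x * r₂} := ⟨1, by simp⟩
    rw [← h] at m2
    obtain ⟨y, hy⟩ := m2
    refine ⟨x, ?_, hx⟩
    have : r₁ = φ (x * y) * r₁ := by
      rw [map_mul]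
      calc r₁ = φ x * r₂ := hx
        _ = φ x * (φ y * r₁) := by rw [← hy]
        _ = φ x * φ y * r₁ := by ring
    have h1 : φ (x * y) = 1 := by
      exact h₁.mul_right_cancel (by rw [one_mul, ← this])
    have hxy : x * y = 1 := lift_inj K C G (by simpa using h1)
    exact IsUnit.of_mul_eq_one (a := x) y hxy
  · rintro ⟨b, hb, hab⟩
    ext z
    simp only [Set.mem_setOf_eq]
    constructor
    · rintro ⟨x, rfl⟩
      exact ⟨x * b, by rw [map_mul, hab]; ring⟩
    · rintro ⟨x, rfl⟩
      refine ⟨x * ↑hb.unit⁻¹, ?_⟩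
      have : φ (↑hb.unit⁻¹ * b) = 1 := by
        rw [← map_one φ]; congr 1; simp
      rw [map_mul]
      calc φ x * r₂ = φ x * (φ (↑hb.unit⁻¹ * b) * r₂) := by rw [this]; ring
        _ = φ x * φ ↑hb.unit⁻¹ * (φ b * r₂) := by rw [map_mul]; ring
        _ = φ x * φ ↑hb.unit⁻¹ * r₁ := by rw [← hab]
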